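/- Under the hypotheses of the general inconsistency theorem, the two conditions P(d_Q([t₀],[X]) < ‖t₀ − X‖) > 0 and P(sup_{g∈G} ⟨g·X, t₀⟩ > ⟨X, t₀⟩) > 0 are equivalent. -/

import Mathlib

open MeasureTheory

/-- Equivalence of the two inconsistency conditions:
`P(d_Q([t₀],[X]) < ‖t₀ − X‖) > 0` iff `P(sup_g ⟨g•X, t₀⟩ > ⟨X, t₀⟩) > 0`. -/
theorem stmt5 {M G Ω : Type*} [NormedAddCommGroup M] [InnerProductSpace ℝ M]
    [CompleteSpace M] [Group G] [MulAction G M] [MeasurableSpace Ω]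
    (μ : Measure Ω) [IsProbabilityMeasure μ]
    (hlin : ∀ g : G, IsLinearMap ℝ fun x : M => g • x)
    (hiso : ∀ (g : G) (x : M), ‖g • x‖ = ‖x‖)
    (X : Ω → M) (t₀ : M)
    (hX2 : Integrable (fun ω => ‖X ω‖ ^ 2) μ)
    (hXint : Integrable X μ)
    (hXmean : ∫ ω, X ω ∂μ = t₀)
    (hbdd : ∀ ω, BddAbove (Set.range fun g : G => (inner ℝ (g • X ω) t₀ : ℝ))) :
    0 < μ {ω | (⨅ g : G, ‖g • t₀ - X ω‖) < ‖t₀ - X ω‖} ↔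
      0 < μ {ω | (inner ℝ (X ω) t₀ : ℝ) < ⨆ g : G, (inner ℝ (g • X ω) t₀ : ℝ)} := by
  -- g preserves inner products
  have hinner : ∀ (g : G) (a b : M), (inner ℝ (g • a) (g • b) : ℝ) = inner ℝ a b := by
    intro g a b
    have hL := hlin g
    have hadd : g • (a + b) = g • a + g • b := hL.map_add a b
    have hsub : g • (a - b) = g • a - g • b := by
      simpa using (IsLinearMap.mk' _ hL).map_sub a b
    rw [real_inner_eq_norm_mul_self_add_norm_mul_self_sub_norm_sub_mul_self_div_two,
        real_inner_eq_norm_mul_self_add_norm_mul_self_sub_norm_sub_mul_self_div_two a b,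
        ← hsub, hiso, hiso, hiso]
  -- key pointwise equivalence for single g
  have hkey : ∀ (g : G) (x : M),
      (‖g • t₀ - x‖ < ‖t₀ - x‖ ↔ (inner ℝ x t₀ : ℝ) < inner ℝ (g⁻¹ • x) t₀) := by
    intro g x
    have h1 : (inner ℝ (g⁻¹ • x) t₀ : ℝ) = inner ℝ (g • t₀) x := by
      have := hinner g (g⁻¹ • x) t₀
      rw [smul_inv_smul] at this
      rw [← this, real_inner_comm]
    have hsq1 : ‖g • t₀ - x‖ ^ 2 = ‖t₀‖ ^ 2 - 2 * inner ℝ (g⁻¹ • x) t₀ + ‖x‖ ^ 2 := by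
      rw [norm_sub_sq_real, hiso, h1]
    have hsq2 : ‖t₀ - x‖ ^ 2 = ‖t₀‖ ^ 2 - 2 * (inner ℝ x t₀ : ℝ) + ‖x‖ ^ 2 := by
      rw [norm_sub_sq_real, real_inner_comm]
    constructor
    · intro h
      have := pow_lt_pow_left₀ h (norm_nonneg _) two_ne_zero
      nlinarith [this, hsq1, hsq2]
    · intro h
      have hlt : ‖g • t₀ - x‖ ^ 2 < ‖t₀ - x‖ ^ 2 := by nlinarith
      nlinarith [norm_nonneg (g • t₀ - x), norm_nonneg (t₀ - x)]
  have hset : {ω | (⨅ g : G, ‖g • t₀ - X ω‖) < ‖t₀ - X ω‖} =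
      {ω | (inner ℝ (X ω) t₀ : ℝ) < ⨆ g : G, (inner ℝ (g • X ω) t₀ : ℝ)} := by
    ext ω
    have hbb : BddBelow (Set.range fun g : G => ‖g • t₀ - X ω‖) :=
      ⟨0, by rintro _ ⟨g, rfl⟩; exact norm_nonneg _⟩
    simp only [Set.mem_setOf_eq]
    rw [ciInf_lt_iff hbb, lt_ciSup_iff (hbdd ω)]
    constructor
    · rintro ⟨g, hg⟩
      exact ⟨g⁻¹, (hkey g (X ω)).1 hg⟩
    · rintro ⟨g, hg⟩
      refine ⟨g⁻¹, (hkey g⁻¹ (X ω)).2 ?_⟩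
      simpa using hg
  rw [hset]
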